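/- Let j ≥ 1 be an integer, h ∈ ℝ[X], and u, v real numbers with u ≠ v. If (a_1,…,a_{j+1}) ∈ ℝ^{j+1} is such that p = h + Σ_{m=1}^{j+1} a_m X^m satisfies p^{(l)}(u) = 0 for every 1 ≤ l ≤ j and p(u) = p(v), then the top unknown coefficient is given explicitly by a_{j+1} = (v − u)^{−(j+1)} · ( h(u) − h(v) + Σ_{i=1}^{j} h^{(i)}(u) · (v − u)^i / i! ). -/

import Mathlib

open Polynomial

/-- Taylor's formula with evaluation. -/
lemma taylor_eval_formula (f : Polynomial ℝ) (u v : ℝ) {n : ℕ} (hn : f.natDegree < n) :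
    f.eval v = ∑ i ∈ Finset.range n,
      (derivative^[i] f).eval u * (v - u) ^ i / (Nat.factorial i) := by
  have h1 : (taylor u f).eval (v - u) = f.eval v := taylor_eval_sub u f v
  rw [← h1, eval_eq_sum_range' (by simpa using hn) (v - u)]
  refine Finset.sum_congr rfl fun i _ => ?_
  have h2 : (i.factorial : ℝ) * (hasseDeriv i f).eval u = (derivative^[i] f).eval u := by
    rw [← funext_iff.mp (factorial_smul_hasseDeriv i) f]
    simp [eval_smul, nsmul_eq_mul]
  have hfac : (i.factorial : ℝ) ≠ 0 := Nat.cast_ne_zero.mpr i.factorial_ne_zero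
  rw [taylor_coeff]
  field_simp [← h2]
  rw [← h2]
  ring

lemma iter_deriv_add (f g : Polynomial ℝ) (n : ℕ) :
    derivative^[n] (f + g) = derivative^[n] f + derivative^[n] g := by
  induction n with
  | zero => simp
  | succ n ih => simp [Function.iterate_succ_apply', ih]

/-- Explicit formula for the top coefficient: if `p = h + ∑_{m=1}^{j+1} a_m X^m`
satisfies `p^{(l)}(u) = 0` for `1 ≤ l ≤ j` and `p(u) = p(v)` with `u ≠ v`, then
`a_{j+1} = (v-u)^{-(j+1)} (h(u) - h(v) + ∑_{i=1}^j h^{(i)}(u) (v-u)^i / i!)`. -/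
theorem stmt8 (j : ℕ) (hj : 1 ≤ j) (h : Polynomial ℝ) (u v : ℝ) (huv : u ≠ v)
    (a : Fin (j + 1) → ℝ)
    (hder : ∀ l : ℕ, 1 ≤ l → l ≤ j →
      (derivative^[l] (h + ∑ m : Fin (j + 1), C (a m) * X ^ ((m : ℕ) + 1))).eval u = 0)
    (heq : (h + ∑ m : Fin (j + 1), C (a m) * X ^ ((m : ℕ) + 1)).eval u =
      (h + ∑ m : Fin (j + 1), C (a m) * X ^ ((m : ℕ) + 1)).eval v) :
    a (Fin.last j) =
      ((v - u) ^ (j + 1))⁻¹ *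
        (h.eval u - h.eval v +
          ∑ i : Fin j,
            (derivative^[(i : ℕ) + 1] h).eval u * (v - u) ^ ((i : ℕ) + 1) /
              Nat.factorial ((i : ℕ) + 1)) := by
  set q : Polynomial ℝ := ∑ m : Fin (j + 1), C (a m) * X ^ ((m : ℕ) + 1) with hq
  set p : Polynomial ℝ := h + q with hp
  -- degree bound for q
  have hqdeg : q.natDegree ≤ j + 1 := by
    apply Polynomial.natDegree_sum_le_of_forall_le
    intro m _
    calc (C (a m) * X ^ ((m : ℕ) + 1)).natDegree ≤ (m : ℕ) + 1 := by
          apply (Polynomial.natDegree_C_mul_le _ _).trans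
          simp
      _ ≤ j + 1 := by omega
  -- derivatives of q vanish beyond j+1
  have hqzero : ∀ i : ℕ, j + 2 ≤ i → derivative^[i] q = 0 := fun i hi =>
    iterate_derivative_eq_zero (lt_of_le_of_lt hqdeg (by omega))
  -- the (j+1)-st derivative of q
  have hqtop : (derivative^[j + 1] q).eval u = (Nat.factorial (j + 1)) * a (Fin.last j) := by
    rw [hq, iterate_derivative_sum]
    rw [Finset.sum_eq_single (Fin.last j)]
    · rw [iterate_derivative_C_mul, iterate_derivative_X_pow_eq_C_mul]
      simp only [Fin.val_last, Nat.sub_self, pow_zero, mul_one, eval_mul, eval_C]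
      rw [Nat.descFactorial_self]
      ring
    · intro m _ hm
      rw [iterate_derivative_C_mul, iterate_derivative_X_pow_eq_C_mul]
      have : (m : ℕ) + 1 < j + 1 := by
        have := Fin.val_lt_last hm
        omega
      rw [Nat.descFactorial_eq_zero_iff_lt.mpr this]
      simp
    · simp
  -- pick n large
  set n : ℕ := max h.natDegree p.natDegree + j + 2 with hn
  have hhn : h.natDegree < n := by omega
  have hpn : p.natDegree < n := by omega
  have Th := taylor_eval_formula h u v hhn
  have Tp := taylor_eval_formula p u v hpn
  -- difference
  have key : p.eval v - h.eval v = ∑ i ∈ Finset.range n,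
      (derivative^[i] q).eval u * (v - u) ^ i / (Nat.factorial i) := by
    rw [Tp, Th, ← Finset.sum_sub_distrib]
    refine Finset.sum_congr rfl fun i _ => ?_
    have : derivative^[i] p = derivative^[i] h + derivative^[i] q := by
      rw [hp, iter_deriv_add]
    rw [this]
    simp [eval_add]
    ring
  -- compute the sum
  have hsplit : ∑ i ∈ Finset.range n,
      (derivative^[i] q).eval u * (v - u) ^ i / (Nat.factorial i)
      = q.eval u + (∑ i ∈ Finset.range j,
        (derivative^[i + 1] q).eval u * (v - u) ^ (i + 1) / (Nat.factorial (i + 1)))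
        + a (Fin.last j) * (v - u) ^ (j + 1) := by
    have hjn : j + 2 ≤ n := by omega
    rw [← Finset.sum_range_add_sum_Ico _ hjn]
    have tail0 : ∑ i ∈ Finset.Ico (j + 2) n,
        (derivative^[i] q).eval u * (v - u) ^ i / (Nat.factorial i) = 0 := by
      apply Finset.sum_eq_zero
      intro i hi
      rw [hqzero i (Finset.mem_Ico.mp hi).1]
      simp
    rw [tail0, add_zero]
    rw [Finset.sum_range_succ, Finset.sum_range_succ']
    rw [hqtop]
    have hfac : ((j + 1).factorial : ℝ) ≠ 0 := Nat.cast_ne_zero.mpr (j + 1).factorial_ne_zero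
    field_simp
    simp only [Function.iterate_zero_apply]
    ring
  -- derivatives of q in middle range
  have hmid : ∀ i ∈ Finset.range j,
      (derivative^[i + 1] q).eval u * (v - u) ^ (i + 1) / (Nat.factorial (i + 1))
      = -((derivative^[i + 1] h).eval u * (v - u) ^ (i + 1) / (Nat.factorial (i + 1))) := by
    intro i hi
    have hi' := Finset.mem_range.mp hi
    have h0 := hder (i + 1) (by omega) (by omega)
    have : derivative^[i + 1] (h + q) = derivative^[i + 1] h + derivative^[i + 1] q :=
      iter_deriv_add h q (i + 1)
    rw [this] at h0
    simp only [eval_add] at h0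
    have : (derivative^[i + 1] q).eval u = -(derivative^[i + 1] h).eval u := by linarith
    rw [this]
    ring
  rw [Finset.sum_congr rfl hmid, Finset.sum_neg_distrib] at hsplit
  -- combine with heq
  have hqu : p.eval u = h.eval u + q.eval u := by rw [hp]; simp
  have heq' : p.eval v = p.eval u := heq.symm
  rw [heq', hqu] at key
  rw [hsplit] at key
  -- key : h.eval u + q.eval u - h.eval v = q.eval u - ∑ ... + a_last (v-u)^{j+1}
  have hvu : (v - u) ^ (j + 1) ≠ 0 := pow_ne_zero _ (sub_ne_zero.mpr (Ne.symm huv))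
  rw [Fin.sum_univ_eq_sum_range
    (fun i => (derivative^[i + 1] h).eval u * (v - u) ^ (i + 1) / (Nat.factorial (i + 1))) j,
    eq_inv_mul_iff_mul_eq₀ hvu]
  linarith
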